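/- Let n ≥ 1 and r = ⌊(n+2)/2⌋. The map x ↦ x − 1 induces a group isomorphism from the multiplicative quotient SL₂^r(ℤ_p)/SL₂^{n+1}(ℤ_p) onto the additive quotient {y ∈ p^r·M₂(ℤ_p) : tr(y) ∈ p^{n+1}ℤ_p} / p^{n+1}·M₂(ℤ_p). -/

import Mathlib

open Matrix

/-- The congruence subgroup `SL₂^r(ℤ_p) = {x ∈ SL₂(ℤ_p) : x - 1 ≡ 0 mod p^r}`, as a set. -/
def slLevel (p : ℕ) [Fact p.Prime] (r : ℕ) : Set (Matrix.SpecialLinearGroup (Fin 2) ℤ_[p]) :=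
  {x | ∀ i j : Fin 2, ((p : ℤ_[p]) ^ r) ∣ (((x : Matrix (Fin 2) (Fin 2) ℤ_[p])) - 1) i j}

/-- The additive lattice `{y ∈ p^r·M₂(ℤ_p) : tr(y) ∈ p^m·ℤ_p}`. -/
def latL (p : ℕ) [Fact p.Prime] (r m : ℕ) : Set (Matrix (Fin 2) (Fin 2) ℤ_[p]) :=
  {y | (∀ i j : Fin 2, ((p : ℤ_[p]) ^ r) ∣ y i j) ∧ ((p : ℤ_[p]) ^ m) ∣ Matrix.trace y}

/-- for `n ≥ 1` and `r = ⌊(n+2)/2⌋`, the map `x ↦ x - 1` induces a group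
isomorphism `SL₂^r(ℤ_p)/SL₂^{n+1}(ℤ_p) ≃ {y ∈ p^r M₂(ℤ_p) : tr y ∈ p^{n+1}ℤ_p}/p^{n+1}M₂(ℤ_p)`:
it maps into the target lattice, is a homomorphism modulo `p^{n+1}M₂(ℤ_p)`, has kernel exactly
`SL₂^{n+1}(ℤ_p)`, and is surjective modulo `p^{n+1}M₂(ℤ_p)`. -/
theorem stmt2 (p : ℕ) [Fact p.Prime] (hp : p ≠ 2) (n r : ℕ) (hn : 1 ≤ n)
    (hr : r = (n + 2) / 2) :
    (∀ x ∈ slLevel p r, ((x : Matrix (Fin 2) (Fin 2) ℤ_[p]) - 1) ∈ latL p r (n + 1)) ∧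
    (∀ x ∈ slLevel p r, ∀ y ∈ slLevel p r, ∀ i j : Fin 2,
      ((p : ℤ_[p]) ^ (n + 1)) ∣
        ((((x * y : Matrix.SpecialLinearGroup (Fin 2) ℤ_[p]) : Matrix (Fin 2) (Fin 2) ℤ_[p]) - 1)
          - ((x : Matrix (Fin 2) (Fin 2) ℤ_[p]) - 1)
          - ((y : Matrix (Fin 2) (Fin 2) ℤ_[p]) - 1)) i j) ∧
    (∀ x ∈ slLevel p r, (x ∈ slLevel p (n + 1) ↔
      ∀ i j : Fin 2, ((p : ℤ_[p]) ^ (n + 1)) ∣ ((x : Matrix (Fin 2) (Fin 2) ℤ_[p]) - 1) i j)) ∧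
    (∀ y ∈ latL p r (n + 1), ∃ x ∈ slLevel p r, ∀ i j : Fin 2,
      ((p : ℤ_[p]) ^ (n + 1)) ∣ (((x : Matrix (Fin 2) (Fin 2) ℤ_[p]) - 1) - y) i j) := by
  have h2r : n + 1 ≤ 2 * r := by omega
  have hrn : r ≤ n + 1 := by omega
  have hr1 : 1 ≤ r := by omega
  -- basic divisibility fact: product of two p^r multiples is a p^(n+1) multiple
  have key : ∀ a b : ℤ_[p], (p : ℤ_[p]) ^ r ∣ a → (p : ℤ_[p]) ^ r ∣ b →
      (p : ℤ_[p]) ^ (n + 1) ∣ a * b := by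
    intro a b ha hb
    calc ((p : ℤ_[p]) ^ (n + 1)) ∣ (p : ℤ_[p]) ^ (2 * r) := pow_dvd_pow _ h2r
    _ = (p : ℤ_[p]) ^ r * (p : ℤ_[p]) ^ r := by rw [two_mul, pow_add]
    _ ∣ a * b := mul_dvd_mul ha hb
  refine ⟨?_, ?_, ?_, ?_⟩
  · -- maps into latL
    intro x hx
    refine ⟨hx, ?_⟩
    set A : Matrix (Fin 2) (Fin 2) ℤ_[p] := (x : Matrix (Fin 2) (Fin 2) ℤ_[p]) with hA
    have hdet : A.det = 1 := x.2
    rw [Matrix.det_fin_two] at hdet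
    have htr : Matrix.trace (A - 1) =
        -(((A - 1) 0 0) * ((A - 1) 1 1) - ((A - 1) 0 1) * ((A - 1) 1 0)) := by
      rw [Matrix.trace_fin_two]
      simp only [Matrix.sub_apply, Matrix.one_apply_eq, Matrix.one_apply_ne,
        Fin.zero_eq_one_iff, Matrix.one_apply_ne', ne_eq]
      simp only [Matrix.one_apply]
      norm_num
      linear_combination hdet
    rw [htr]
    exact dvd_neg.2 (dvd_sub (key _ _ (hx 0 0) (hx 1 1)) (key _ _ (hx 0 1) (hx 1 0)))
  · -- homomorphism mod p^(n+1)
    intro x hx y hy i j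
    have hEq : ((((x * y : Matrix.SpecialLinearGroup (Fin 2) ℤ_[p]) :
          Matrix (Fin 2) (Fin 2) ℤ_[p]) - 1)
          - ((x : Matrix (Fin 2) (Fin 2) ℤ_[p]) - 1)
          - ((y : Matrix (Fin 2) (Fin 2) ℤ_[p]) - 1)) =
        ((x : Matrix (Fin 2) (Fin 2) ℤ_[p]) - 1) *
          ((y : Matrix (Fin 2) (Fin 2) ℤ_[p]) - 1) := by
      rw [Matrix.SpecialLinearGroup.coe_mul]
      noncomm_ring
    rw [hEq, Matrix.mul_apply]
    exact Finset.dvd_sum fun k _ => key _ _ (hx i k) (hy k j)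
  · -- kernel
    intro x _
    exact Iff.rfl
  · -- surjectivity
    rintro y ⟨hy, hytr⟩
    set a : ℤ_[p] := 1 + y 0 0 with ha
    set b : ℤ_[p] := y 0 1 with hb
    set c : ℤ_[p] := y 1 0 with hc
    set d : ℤ_[p] := 1 + y 1 1 with hd
    have hu : IsUnit d := by
      by_contra h
      rw [PadicInt.not_isUnit_iff, PadicInt.norm_lt_one_iff_dvd] at h
      have hpy : (p : ℤ_[p]) ∣ y 1 1 :=
        dvd_trans (dvd_pow_self _ (by omega : r ≠ 0)) (hy 1 1)
      have : (p : ℤ_[p]) ∣ 1 := by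
        have := dvd_sub h hpy
        simpa [hd] using this
      exact PadicInt.prime_p.not_unit (isUnit_of_dvd_one this)
    obtain ⟨u, huu⟩ := hu
    set e : ℤ_[p] := (↑u⁻¹ : ℤ_[p]) * (1 - (a * d - b * c)) with he
    have h2 : (↑u⁻¹ : ℤ_[p]) * ↑u = 1 := by exact_mod_cast u.inv_mul
    have hed : e * d = 1 - (a * d - b * c) := by
      calc e * d = (↑u⁻¹ * ↑u) * (1 - (a * d - b * c)) := by rw [he, huu]; ring
      _ = 1 - (a * d - b * c) := by rw [h2, one_mul]
    -- divisibility of the correction term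
    have hkey : (p : ℤ_[p]) ^ (n + 1) ∣ 1 - (a * d - b * c) := by
      have h1 : 1 - (a * d - b * c) =
          -(Matrix.trace y) - (y 0 0 * y 1 1 - y 0 1 * y 1 0) := by
        rw [Matrix.trace_fin_two, ha, hb, hc, hd]; ring
      rw [h1]
      exact dvd_sub (dvd_neg.2 hytr) (dvd_sub (key _ _ (hy 0 0) (hy 1 1))
        (key _ _ (hy 0 1) (hy 1 0)))
    have heDvd : (p : ℤ_[p]) ^ (n + 1) ∣ e := he ▸ Dvd.dvd.mul_left hkey _
    have heDvdr : (p : ℤ_[p]) ^ r ∣ e := dvd_trans (pow_dvd_pow _ hrn) heDvd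
    -- the matrix
    set X : Matrix (Fin 2) (Fin 2) ℤ_[p] := !![a + e, b; c, d] with hX
    have hdet : X.det = 1 := by
      rw [hX, Matrix.det_fin_two_of]
      linear_combination hed
    refine ⟨⟨X, hdet⟩, ?_, ?_⟩
    · intro i j
      fin_cases i <;> fin_cases j <;> simp [hX, Matrix.one_apply]
      · have h : a + e - 1 = y 0 0 + e := by rw [ha]; ring
        rw [h]; exact dvd_add (hy 0 0) heDvdr
      · rw [hb]; exact hy 0 1
      · rw [hc]; exact hy 1 0
      · have h : d - 1 = y 1 1 := by rw [hd]; ring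
        rw [h]; exact hy 1 1
    · intro i j
      fin_cases i <;> fin_cases j <;> simp [hX, Matrix.one_apply]
      · have h : a + e - 1 - y 0 0 = e := by rw [ha]; ring
        rw [h]; exact heDvd
      · rw [hb, sub_self]; exact dvd_zero _
      · rw [hc, sub_self]; exact dvd_zero _
      · have h : d - 1 - y 1 1 = 0 := by rw [hd]; ring
        rw [h]; exact dvd_zero _
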